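/- Quadratic representation of the final output of a single-layer S6 unit on embedded scalar inputs: Fix a constant Δ > 0 and force all sampling intervals of the S6 unit to equal Δ, and let M ∈ ℝ^d be an encoder with entries m^{(i)}. Then, with Ā = exp(ΔA), P̄ = A^{-1}(Ā − I) B M ∈ ℝ^{n×1}, and Q̄ = M^⊤ C ∈ ℝ^{1×n}, the i-th entry of the final output of the S6 unit applied to the embedded sequence (u_1 M, …, u_L M) equals Γ_S6((u_1 M, …, u_L M))_L^{(i)} = m^{(i)} · u_L · Σ_{j=1}^L Q̄ Ā^{L−j} P̄ u_j², for every scalar sequence (u_1, …, u_L) ∈ ℝ^L and every 1 ≤ i ≤ d. In particular, on sequences with u_L = 1, every channel of the final output equals m^{(i)} times one common quadratic polynomial of (u_1, …, u_L) that does not depend on i. -/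

import Mathlib

open Matrix Filter Asymptotics MeasureTheory Real Topology

noncomputable section

/-- Matrix exponential over the reals. -/
def mexp {n : ℕ} (A : Matrix (Fin n) (Fin n) ℝ) : Matrix (Fin n) (Fin n) ℝ :=
  NormedSpace.exp A

/-- The softplus function `z ↦ log (1 + e^z)`. -/
def softplus (z : ℝ) : ℝ := Real.log (1 + Real.exp z)

/-- Time-varying linear state recursion: `x 0 = 0`,
`x (k+1) = Abar k *ᵥ x k + u k • Bbar k`.  (Index `k : ℕ` is the 0-based
position of the input, so `x (k+1)` is the state `x_{k+1}` after seeing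
inputs `u_1 = u 0, …, u_{k+1} = u k`.) -/
def tvState {n : ℕ} (Abar : ℕ → Matrix (Fin n) (Fin n) ℝ) (Bbar : ℕ → Fin n → ℝ)
    (u : ℕ → ℝ) : ℕ → Fin n → ℝ
  | 0 => 0
  | k + 1 => (Abar k) *ᵥ (tvState Abar Bbar u k) + u k • Bbar k

/-- Zero-padded extension of a finite scalar sequence `(u_1, …, u_L)`
(`u 0` is `u_1`, …, `u ⟨L-1⟩` is `u_L`). -/
def seq {L : ℕ} (u : Fin L → ℝ) : ℕ → ℝ := fun k => if h : k < L then u ⟨k, h⟩ else 0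

/-- Zero-padded extension of a finite vector-valued sequence. -/
def seqd {L d : ℕ} (u : Fin L → Fin d → ℝ) : ℕ → Fin d → ℝ :=
  fun k => if h : k < L then u ⟨k, h⟩ else 0

/-- The final (`L`-th) output of an S6 unit in which every sampling interval is
forced to equal the constant `Δ`. -/
def s6FinalFixed {n d : ℕ} (A : Matrix (Fin n) (Fin n) ℝ) (Δ : ℝ)
    (B : Matrix (Fin n) (Fin d) ℝ) (C : Matrix (Fin d) (Fin n) ℝ)
    (L : ℕ) (u : ℕ → Fin d → ℝ) (i : Fin d) : ℝ :=
  (u (L - 1) ᵥ* C) ⬝ᵥ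
    tvState (fun _ => mexp (Δ • A))
      (fun k => A⁻¹ *ᵥ ((mexp (Δ • A) - 1) *ᵥ (B *ᵥ u k)))
      (fun k => u k i) L

/-- **Quadratic representation of the final output of a single-layer S6 unit on
embedded scalar inputs** (from the proof of Theorem 3.1, part 2).  With all
sampling intervals forced equal to `Δ`, encoder `M`, `Ā = exp(ΔA)`,
`P̄ = A⁻¹(Ā − I)(B M)` and `Q̄ = Mᵀ C`, the `i`-th entry of the final output of
the S6 unit on the embedded sequence `(u_1 M, …, u_L M)` is
`m^{(i)} · u_L · Σ_{j=1}^L Q̄ Ā^{L−j} P̄ u_j²`; in particular, on sequences with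
`u_L = 1` every channel equals `m^{(i)}` times one common quadratic polynomial
of `(u_1, …, u_L)` that does not depend on `i`. -/

lemma state_formula {n : ℕ} (Ab : Matrix (Fin n) (Fin n) ℝ) (Bb : ℕ → Fin n → ℝ)
    (v : ℕ → ℝ) :
    ∀ m, tvState (fun _ => Ab) Bb v m
      = ∑ k ∈ Finset.range m, v k • (Ab ^ (m - 1 - k) *ᵥ Bb k)
  | 0 => by simp [tvState]
  | m + 1 => by
    rw [tvState, state_formula Ab Bb v m, Finset.sum_range_succ]
    congr 1
    · rw [← Matrix.mulVecLin_apply, map_sum]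
      refine Finset.sum_congr rfl fun k hk => ?_
      rw [_root_.map_smul, Matrix.mulVecLin_apply, Matrix.mulVec_mulVec, ← pow_succ']
      have h2 : m - 1 - k + 1 = m + 1 - 1 - k := by
        have := Finset.mem_range.mp hk; omega
      rw [h2]
    · simp

lemma dot_sum_helper {m : Type*} [Fintype m] (v : m → ℝ) {ι : Type*} (s : Finset ι)
    (f : ι → m → ℝ) : v ⬝ᵥ (∑ k ∈ s, f k) = ∑ k ∈ s, v ⬝ᵥ f k := by
  simp only [dotProduct, Finset.sum_apply, Finset.mul_sum]
  exact Finset.sum_comm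

theorem s6_final_output_is_quadratic
    (n d L : ℕ) (hL : 0 < L) (Δ : ℝ) (hΔ : 0 < Δ)
    (A : Matrix (Fin n) (Fin n) ℝ) (hA : IsUnit A.det)
    (B : Matrix (Fin n) (Fin d) ℝ) (C : Matrix (Fin d) (Fin n) ℝ)
    (M : Fin d → ℝ) (u : Fin L → ℝ) (i : Fin d) :
    s6FinalFixed A Δ B C L (fun k => seq u k • M) i =
      M i * u ⟨L - 1, by omega⟩ *
        ∑ j : Fin L,
          ((M ᵥ* C) ⬝ᵥ
              ((mexp (Δ • A)) ^ (L - 1 - (j : ℕ)) *ᵥ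
                (A⁻¹ *ᵥ ((mexp (Δ • A) - 1) *ᵥ (B *ᵥ M))))) * (u j) ^ 2 := by
  unfold s6FinalFixed
  rw [state_formula]
  set Ab := mexp (Δ • A) with hAb
  have hL1 : L - 1 < L := Nat.sub_lt hL one_pos
  have hseq : ∀ h : L - 1 < L, seq u (L-1) = u ⟨L-1, h⟩ := fun h => by simp [_root_.seq, h]
  have key : ∀ k ∈ Finset.range L,
      ((fun k => seq u k • M) k i) •
        (Ab ^ (L - 1 - k) *ᵥ (A⁻¹ *ᵥ ((Ab - 1) *ᵥ (B *ᵥ ((fun k => seq u k • M) k)))))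
      = (M i * (seq u k)^2) •
        (Ab ^ (L - 1 - k) *ᵥ (A⁻¹ *ᵥ ((Ab - 1) *ᵥ (B *ᵥ M)))) := by
    intro k hk
    simp only [Matrix.mulVec_smul, Pi.smul_apply, smul_eq_mul, smul_smul]
    congr 1
    ring
  rw [Finset.sum_congr rfl key,
    show (fun k => seq u k • M) (L-1) = u ⟨L-1, hL1⟩ • M from by simp only []; rw [hseq hL1],
    Matrix.smul_vecMul, smul_dotProduct,
    dot_sum_helper]
  simp only [dotProduct_smul, smul_eq_mul]
  rw [Finset.mul_sum, Finset.mul_sum, ← Fin.sum_univ_eq_sum_range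
    (fun k => u ⟨L-1, hL1⟩ * (M i * seq u k ^ 2 * ((M ᵥ* C) ⬝ᵥ (Ab ^ (L-1-k) *ᵥ (A⁻¹ *ᵥ ((Ab - 1) *ᵥ (B *ᵥ M)))))))]
  refine Finset.sum_congr rfl fun j _ => ?_
  have : seq u (j : ℕ) = u j := by simp [_root_.seq, j.isLt]
  rw [this]
  ring
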